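/- Let V be a finite-dimensional Hermitian space and f a Hermitian endomorphism of V. Then for every nonzero v ∈ V, the function t ↦ ⟨f e^{tf}v, e^{tf}v⟩/‖e^{tf}v‖² is monotone nondecreasing in t. -/
import Mathlib


open scoped ComplexInnerProductSpace

private lemma stmt_11_aux {ι : Type*} [Fintype ι] (lam c : ι → ℝ)
    (hc : ∀ i, 0 ≤ c i) (hex : ∃ i, 0 < c i) :
    Monotone (fun t : ℝ =>
      (∑ i, lam i * Real.exp (2 * t * lam i) * c i) /
        (∑ i, Real.exp (2 * t * lam i) * c i)) := by
  have hD : ∀ u : ℝ, 0 < ∑ i, Real.exp (2 * u * lam i) * c i := by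
    intro u
    obtain ⟨i0, hi0⟩ := hex
    refine Finset.sum_pos' (fun i _ => mul_nonneg (Real.exp_pos _).le (hc i)) ⟨i0, Finset.mem_univ i0, ?_⟩
    positivity
  intro s t hst
  simp only
  rw [div_le_div_iff₀ (hD s) (hD t)]
  set h : ι → ι → ℝ := fun i j =>
    (lam i * Real.exp (2 * t * lam i) * c i) * (Real.exp (2 * s * lam j) * c j)
      - (lam i * Real.exp (2 * s * lam i) * c i) * (Real.exp (2 * t * lam j) * c j)
    with hh
  have hsym : ∀ i j, 0 ≤ h i j + h j i := by
    intro i j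
    have key : h i j + h j i = (lam i - lam j) *
        (Real.exp (2 * t * lam i) * Real.exp (2 * s * lam j)
          - Real.exp (2 * s * lam i) * Real.exp (2 * t * lam j)) * (c i * c j) := by
      simp only [hh]; ring
    rw [key]
    have hcc : 0 ≤ c i * c j := mul_nonneg (hc i) (hc j)
    rcases le_total (lam j) (lam i) with hle | hle
    · refine mul_nonneg (mul_nonneg (by linarith) ?_) hcc
      rw [← Real.exp_add, ← Real.exp_add, sub_nonneg, Real.exp_le_exp]
      nlinarith
    · have h2 : Real.exp (2 * t * lam i) * Real.exp (2 * s * lam j)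
          - Real.exp (2 * s * lam i) * Real.exp (2 * t * lam j) ≤ 0 := by
        rw [← Real.exp_add, ← Real.exp_add, sub_nonpos, Real.exp_le_exp]
        nlinarith
      nlinarith [mul_nonneg (mul_nonneg (neg_nonneg.2 (show lam i - lam j ≤ 0 by linarith))
        (neg_nonneg.2 h2)) hcc]
  have hsum : 0 ≤ ∑ i, ∑ j, h i j := by
    have h2 : 0 ≤ ∑ i, ∑ j, (h i j + h j i) :=
      Finset.sum_nonneg fun i _ => Finset.sum_nonneg fun j _ => hsym i j
    have h3 : ∑ i, ∑ j, (h i j + h j i) = (∑ i, ∑ j, h i j) + ∑ i, ∑ j, h j i := by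
      simp [Finset.sum_add_distrib]
    have h4 : (∑ i, ∑ j, h j i) = ∑ i, ∑ j, h i j := Finset.sum_comm
    rw [h3, h4] at h2
    linarith
  have expand :
      (∑ i, lam i * Real.exp (2 * t * lam i) * c i) * (∑ i, Real.exp (2 * s * lam i) * c i)
        - (∑ i, lam i * Real.exp (2 * s * lam i) * c i) * (∑ i, Real.exp (2 * t * lam i) * c i)
        = ∑ i, ∑ j, h i j := by
    rw [Finset.sum_mul_sum, Finset.sum_mul_sum, ← Finset.sum_sub_distrib]
    exact Finset.sum_congr rfl fun i _ => by rw [← Finset.sum_sub_distrib]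
  linarith [expand.symm ▸ hsum]

/-- For a Hermitian endomorphism `f` of a finite-dimensional
Hermitian space (given by an orthonormal eigenbasis `b` with real eigenvalues
`lam i`) and a nonzero vector `v`, the Rayleigh quotient
`t ↦ ⟨f e^{tf} v, e^{tf} v⟩ / ‖e^{tf} v‖²`, which in the eigenbasis equals
`t ↦ (∑ i, lam i · e^{2t·lam i} · ‖⟪b i, v⟫‖²) / (∑ i, e^{2t·lam i} · ‖⟪b i, v⟫‖²)`,
is monotone nondecreasing in `t`. -/
theorem stmt_11 {E : Type*} [NormedAddCommGroup E] [InnerProductSpace ℂ E]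
    [FiniteDimensional ℂ E] {ι : Type*} [Fintype ι]
    (b : OrthonormalBasis ι ℂ E) (lam : ι → ℝ) (v : E) (hv : v ≠ 0) :
    Monotone (fun t : ℝ =>
      (∑ i, lam i * Real.exp (2 * t * lam i) * ‖⟪b i, v⟫‖ ^ 2) /
        (∑ i, Real.exp (2 * t * lam i) * ‖⟪b i, v⟫‖ ^ 2)) := by
  have hex : ∃ i, 0 < ‖⟪b i, v⟫‖ ^ 2 := by
    by_contra hcon
    push_neg at hcon
    apply hv
    have hz : ∀ i, ⟪b i, v⟫ = 0 := by
      intro i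
      have h1 : ‖⟪b i, v⟫‖ ^ 2 = 0 :=
        le_antisymm (hcon i) (by positivity)
      simpa using h1
    have : b.repr v = 0 := by
      ext i
      simpa [b.repr_apply_apply] using hz i
    simpa using congrArg b.repr.symm this
  exact stmt_11_aux lam (fun i => ‖⟪b i, v⟫‖ ^ 2) (fun i => by positivity) hex
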